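/- Let Q ⊆ ℝ^n be a closed convex set, f: ℝ^n → ℝ convex, A a linear map from ℝ^n to ℝ^m, b ∈ ℝ^m, and define the dual objective φ(λ) = ⟨λ, b⟩ + max_{x∈Q}(−f(x) − ⟨Aᵀλ, x⟩), with x(λ) ∈ Q a maximizer so that ∇φ(λ) = b − A x(λ) is a subgradient of φ. Assume the dual problem min_λ φ(λ) has a solution λ* with ‖λ*‖₂ ≤ R, and that the subgradient of φ is ν-Hölder continuous with constant M_ν for some ν ∈ [0,1]. Let the sequences (λ^k), (η^k), (ζ^k), (a_k), (A_k) be generated by the primal-dual universal method (Algorithm 5) started from λ^0 = ζ^0 = η^0 = 0 with parameter ε > 0, so that A_k φ(η^k) ≤ min_{λ∈ℝ^m}{ Σ_{i=0}^{k−1} a_{i+1}(φ(λ^i) + ⟨∇φ(λ^i), λ − λ^i⟩) + (1/2)‖λ‖₂² } + A_k ε/2, and set x̂^k = (1/A_k) Σ_{i=0}^{k−1} a_{i+1} x(λ^i). Then for all k ≥ 1: ‖A x̂^k − b‖₂ ≤ 2R/A_k + ε/(2R) and |φ(η^k) + f(x̂^k)| ≤ 2R²/A_k + ε/2, where A_k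 ≥ [(1+ν)/(1−ν)]^{(1−ν)/(1+ν)} k^{(1+3ν)/(1+ν)} ε^{(1−ν)/(1+ν)} / (2^{(1+3ν)/(1+ν)} M_ν^{2/(1+ν)}). -/

import Mathlib

set_option maxHeartbeats 1000000


open scoped RealInnerProductSpace

/-- (Theorem 12 of the paper.) Primal-dual properties of the universal
method applied to the dual `φ(λ) = ⟪λ, b⟫ + max_{x ∈ Q}(-f x - ⟪Aᵀλ, x⟫)` of the linearly
constrained problem `min_{x ∈ Q, Ax = b} f x`: with `x̂^k = (1/A_k) Σ_{i<k} a_{i+1} x(λ^i)`,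
the method guarantees `‖A x̂^k - b‖ ≤ 2R/A_k + ε/(2R)` and
`|φ(η^k) + f(x̂^k)| ≤ 2R²/A_k + ε/2`, where
`A_k ≥ ((1+ν)/(1-ν))^{(1-ν)/(1+ν)} k^{(1+3ν)/(1+ν)} ε^{(1-ν)/(1+ν)} /
  (2^{(1+3ν)/(1+ν)} M_ν^{2/(1+ν)})`. -/
theorem stmt_19 (nn m : ℕ) (ν Mν ε R : ℝ) (hν : ν ∈ Set.Icc (0 : ℝ) 1) (hMν : 0 ≤ Mν)
    (hε : 0 < ε) (hRpos : 0 < R)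
    (Q : Set (EuclideanSpace ℝ (Fin nn))) (hQclosed : IsClosed Q) (hQconv : Convex ℝ Q)
    (f : EuclideanSpace ℝ (Fin nn) → ℝ) (hconv : ConvexOn ℝ Set.univ f)
    (Amap : EuclideanSpace ℝ (Fin nn) →L[ℝ] EuclideanSpace ℝ (Fin m))
    (b : EuclideanSpace ℝ (Fin m))
    (φ : EuclideanSpace ℝ (Fin m) → ℝ)
    (xsel : EuclideanSpace ℝ (Fin m) → EuclideanSpace ℝ (Fin nn))
    (hxsel : ∀ lam, xsel lam ∈ Q)
    (hmax : ∀ lam, ∀ z ∈ Q, -f z - ⟪ContinuousLinearMap.adjoint Amap lam, z⟫ ≤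
      -f (xsel lam) - ⟪ContinuousLinearMap.adjoint Amap lam, xsel lam⟫)
    (hφ : ∀ lam, φ lam = ⟪lam, b⟫ +
      (-f (xsel lam) - ⟪ContinuousLinearMap.adjoint Amap lam, xsel lam⟫))
    (gφ : EuclideanSpace ℝ (Fin m) → EuclideanSpace ℝ (Fin m))
    (hgφ : ∀ lam, gφ lam = b - Amap (xsel lam))
    (hhold : ∀ l1 l2, ‖gφ l1 - gφ l2‖ ≤ Mν * ‖l1 - l2‖ ^ ν)
    (lamstar : EuclideanSpace ℝ (Fin m)) (hstar : ∀ lam, φ lamstar ≤ φ lam)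
    (hR : ‖lamstar‖ ≤ R)
    (lam η : ℕ → EuclideanSpace ℝ (Fin m)) (a A : ℕ → ℝ)
    (hapos : ∀ i, 0 < a (i + 1))
    (hA : ∀ k, A k = ∑ i ∈ Finset.range k, a (i + 1))
    (hrec : ∀ k (z : EuclideanSpace ℝ (Fin m)), A k * φ (η k) ≤
      (∑ i ∈ Finset.range k, a (i + 1) * (φ (lam i) + ⟪gφ (lam i), z - lam i⟫)) +
        (1 / 2) * ‖z‖ ^ 2 + A k * ε / 2)
    (xhat : ℕ → EuclideanSpace ℝ (Fin nn))
    (hxhat : ∀ k, xhat k = (A k)⁻¹ • ∑ i ∈ Finset.range k, a (i + 1) • xsel (lam i))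
    (hAlow : ∀ k : ℕ,
      ((1 + ν) / (1 - ν)) ^ ((1 - ν) / (1 + ν)) *
        (k : ℝ) ^ ((1 + 3 * ν) / (1 + ν)) * ε ^ ((1 - ν) / (1 + ν)) /
        ((2 : ℝ) ^ ((1 + 3 * ν) / (1 + ν)) * Mν ^ (2 / (1 + ν))) ≤ A k) :
    ∀ k : ℕ, 1 ≤ k →
      ‖Amap (xhat k) - b‖ ≤ 2 * R / A k + ε / (2 * R) ∧
      |φ (η k) + f (xhat k)| ≤ 2 * R ^ 2 / A k + ε / 2 := by
  intro k hk
  have hAk : 0 < A k := by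
    rw [hA]
    exact Finset.sum_pos (fun i _ => hapos i) (Finset.nonempty_range_iff.mpr (by omega))
  set g : EuclideanSpace ℝ (Fin m) := Amap (xhat k) - b with hgdef
  set w : ℕ → ℝ := fun i => (A k)⁻¹ * a (i + 1) with hw
  have hw0 : ∀ i ∈ Finset.range k, 0 ≤ w i := fun i _ => by
    have := hapos i; positivity
  have hw1 : ∑ i ∈ Finset.range k, w i = 1 := by
    rw [← Finset.mul_sum, ← hA, inv_mul_cancel₀ hAk.ne']
  have hxhatw : xhat k = ∑ i ∈ Finset.range k, w i • xsel (lam i) := by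
    rw [hxhat, Finset.smul_sum]
    exact Finset.sum_congr rfl fun i _ => smul_smul _ _ _
  have hxhatQ : xhat k ∈ Q := by
    rw [hxhatw]
    exact hQconv.sum_mem hw0 hw1 (fun i _ => hxsel (lam i))
  -- Jensen
  have hjensen : A k * f (xhat k) ≤ ∑ i ∈ Finset.range k, a (i + 1) * f (xsel (lam i)) := by
    have h := hconv.map_sum_le (p := fun i => xsel (lam i)) hw0 hw1 (fun i _ => Set.mem_univ _)
    rw [← hxhatw] at h
    have h2 : A k * f (xhat k) ≤ A k * ∑ i ∈ Finset.range k, w i • f (xsel (lam i)) :=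
      mul_le_mul_of_nonneg_left h hAk.le
    calc A k * f (xhat k) ≤ A k * ∑ i ∈ Finset.range k, w i • f (xsel (lam i)) := h2
      _ = ∑ i ∈ Finset.range k, a (i + 1) * f (xsel (lam i)) := by
          rw [Finset.mul_sum]
          refine Finset.sum_congr rfl fun i _ => ?_
          simp only [hw, smul_eq_mul]
          field_simp
  -- sum of a • xsel equals A k • xhat
  have hsumx : (∑ i ∈ Finset.range k, a (i + 1) • xsel (lam i)) = A k • xhat k := by
    rw [hxhat, smul_smul, mul_inv_cancel₀ hAk.ne', one_smul]
  -- KEY inequality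
  have key : ∀ z : EuclideanSpace ℝ (Fin m),
      A k * (φ (η k) + f (xhat k)) ≤ -(A k * ⟪g, z⟫) + (1/2) * ‖z‖ ^ 2 + A k * ε / 2 := by
    intro z
    have hterm : ∀ i ∈ Finset.range k, a (i + 1) * (φ (lam i) + ⟪gφ (lam i), z - lam i⟫)
        = a (i + 1) * (-f (xsel (lam i))) + a (i + 1) * ⟪b - Amap (xsel (lam i)), z⟫ := by
      intro i _
      rw [hφ, hgφ, inner_sub_right]
      have h1 : ⟪b - Amap (xsel (lam i)), lam i⟫
          = ⟪lam i, b⟫ - ⟪ContinuousLinearMap.adjoint Amap (lam i), xsel (lam i)⟫ := by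
        rw [inner_sub_left, ContinuousLinearMap.adjoint_inner_left,
          real_inner_comm b (lam i), real_inner_comm (Amap (xsel (lam i))) (lam i)]
      rw [h1]; ring
    have hsum : (∑ i ∈ Finset.range k, a (i + 1) * (φ (lam i) + ⟪gφ (lam i), z - lam i⟫))
        = (∑ i ∈ Finset.range k, a (i + 1) * (-f (xsel (lam i)))) - A k * ⟪g, z⟫ := by
      rw [Finset.sum_congr rfl hterm, Finset.sum_add_distrib]
      congr 1
      have h2 : (∑ i ∈ Finset.range k, a (i + 1) * ⟪b - Amap (xsel (lam i)), z⟫)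
          = ⟪∑ i ∈ Finset.range k, a (i + 1) • (b - Amap (xsel (lam i))), z⟫ := by
        rw [sum_inner]
        exact Finset.sum_congr rfl fun i _ => (real_inner_smul_left _ _ _).symm
      have h3 : (∑ i ∈ Finset.range k, a (i + 1) • (b - Amap (xsel (lam i))))
          = A k • (b - Amap (xhat k)) := by
        simp only [smul_sub]
        rw [Finset.sum_sub_distrib, ← Finset.sum_smul, ← hA, ← map_smul, ← hsumx, map_sum]
        congr 1
        · exact Finset.sum_congr rfl fun i _ => by rw [map_smul]
      rw [h2, h3, real_inner_smul_left]
      have : (b - Amap (xhat k)) = -g := by rw [hgdef]; abel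
      rw [this, inner_neg_left]; ring
    have h := hrec k z
    rw [hsum] at h
    have h4 : (∑ i ∈ Finset.range k, a (i + 1) * (-f (xsel (lam i))))
        = -∑ i ∈ Finset.range k, a (i + 1) * f (xsel (lam i)) := by
      rw [← Finset.sum_neg_distrib]
      exact Finset.sum_congr rfl fun i _ => by ring
    rw [h4] at h
    nlinarith [hjensen]
  -- lower bound
  have hlow : -(R * ‖g‖) ≤ φ (η k) + f (xhat k) := by
    have h1 := hmax lamstar (xhat k) hxhatQ
    have h2 : -f (xhat k) - ⟪lamstar, g⟫ ≤ φ lamstar := by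
      rw [hφ]
      have h3 : ⟪lamstar, g⟫ = ⟪ContinuousLinearMap.adjoint Amap lamstar, xhat k⟫
          - ⟪lamstar, b⟫ := by
        rw [hgdef, inner_sub_right, ContinuousLinearMap.adjoint_inner_left]
      rw [h3]; linarith
    have h4 : ⟪lamstar, g⟫ ≤ R * ‖g‖ := by
      calc ⟪lamstar, g⟫ ≤ ‖lamstar‖ * ‖g‖ := real_inner_le_norm _ _
        _ ≤ R * ‖g‖ := mul_le_mul_of_nonneg_right hR (norm_nonneg _)
    have h5 := hstar (η k)
    linarith
  -- upper bound with specific z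
  have hub : A k * (φ (η k) + f (xhat k)) ≤ -(2 * R * (A k * ‖g‖)) + 2 * R ^ 2 + A k * ε / 2 := by
    by_cases hg0 : g = 0
    · have h := key 0
      simp only [inner_zero_right, norm_zero, mul_zero, neg_zero, zero_add] at h
      rw [hg0]
      simp only [norm_zero, mul_zero, neg_zero]
      nlinarith
    · have hgn : 0 < ‖g‖ := norm_pos_iff.mpr hg0
      have h := key ((2 * R / ‖g‖) • g)
      have h1 : ⟪g, (2 * R / ‖g‖) • g⟫ = 2 * R * ‖g‖ := by
        rw [real_inner_smul_right, real_inner_self_eq_norm_sq]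
        field_simp
      have h2 : ‖(2 * R / ‖g‖) • g‖ = 2 * R := by
        rw [norm_smul, Real.norm_eq_abs, abs_div, abs_of_pos (by linarith), abs_of_pos hgn]
        field_simp
      rw [h1, h2] at h
      nlinarith
  have hlowA : -(A k * (R * ‖g‖)) ≤ A k * (φ (η k) + f (xhat k)) := by
    have h := mul_le_mul_of_nonneg_left hlow hAk.le
    rw [mul_neg] at h
    exact h
  have hgbound : ‖g‖ ≤ 2 * R / A k + ε / (2 * R) := by
    rw [div_add_div _ _ hAk.ne' (by positivity : (2 * R : ℝ) ≠ 0),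
      le_div_iff₀ (by positivity)]
    nlinarith
  constructor
  · exact hgbound
  · rw [abs_le]
    constructor
    · have : R * ‖g‖ ≤ R * (2 * R / A k + ε / (2 * R)) :=
        mul_le_mul_of_nonneg_left hgbound hRpos.le
      have heq : R * (2 * R / A k + ε / (2 * R)) = 2 * R ^ 2 / A k + ε / 2 := by
        field_simp
      rw [heq] at this
      linarith
    · have h := hub
      have hgn : 0 ≤ 2 * R * (A k * ‖g‖) := by positivity
      have : A k * (φ (η k) + f (xhat k)) ≤ 2 * R ^ 2 + A k * ε / 2 := by linarith
      rw [div_add' _ _ _ hAk.ne', le_div_iff₀ hAk]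
      nlinarith
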